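/- Let σ(x) = 1/(1 + exp(−x)) be the sigmoid function and, for d ≥ 1, let logN(ω | μ, v) = ∑_{j=1}^d [ −(ω_j − μ_j)² / (2 v_j) − (1/2)·log(2π v_j) ] for ω, μ ∈ ℝ^d and v ∈ ℝ^d with v_j > 0. Fix real numbers g_1, …, g_n, summarizing prompts φ_1, …, φ_n ∈ ℝ^d, a function α : ℝ^d → ℝ^d whose output components are all strictly positive, local prompts ω_{t,k} ∈ ℝ^d (t = 1,…,m, k = 1,…,n_t), and assignments z_{t,k}^i ∈ {0,1} with ∑_{i=1}^n z_{t,k}^i = 1 for all (t,k). Set ψ_{t,k} = ∑_{i=1}^n z_{t,k}^i · φ_i and c_{t,i} = ∑_{k=1}^{n_t} z_{t,k}^i. Then the total log-likelihood ∑_{t=1}^m [ ∑_{k=1}^{n_t} logN(ω_{t,k} | ψ_{t,k}, α(ψ_{t,k})) + ∑_{i=1}^n ( c_{t,i} · log σ(g_i) + (1 − c_{t,i}) · log(1 − σ(g_i)) ) ] equals ∑_{i=1}^n ∑_{t=1}^m ∑_{k=1}^{n_t} z_{t,k}^i · C_{t,k}^i + m · ∑_{i=1}^n log(1 − σ(g_i)),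 where C_{t,k}^i = logN(ω_{t,k} | φ_i, α(φ_i)) + log( σ(g_i) / (1 − σ(g_i)) ); in particular, the total log-likelihood is an affine function of the assignment variables z with coefficient matrix C. -/
import Mathlib


/-- The sigmoid function `σ(x) = 1 / (1 + exp (-x))`. -/
noncomputable def sigmoid (x : ℝ) : ℝ := 1 / (1 + Real.exp (-x))

/-- Log-density at `ω` of a `d`-dimensional Gaussian with mean `μ` and diagonal
covariance with variance vector `v`. -/
noncomputable def logN (d : ℕ) (ω μ v : Fin d → ℝ) : ℝ :=
  ∑ j, (-(ω j - μ j) ^ 2 / (2 * v j) - (1 / 2) * Real.log (2 * Real.pi * v j))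

lemma sigmoid_pos (x : ℝ) : 0 < sigmoid x := by
  unfold sigmoid
  positivity

lemma sigmoid_lt_one (x : ℝ) : sigmoid x < 1 := by
  unfold sigmoid
  rw [div_lt_one (by positivity)]
  linarith [Real.exp_pos (-x)]

lemma onehot {n : ℕ} (z : Fin n → ℝ) (hbin : ∀ i, z i = 0 ∨ z i = 1)
    (hone : ∑ i, z i = 1) : ∃ i₀, z i₀ = 1 ∧ ∀ j, j ≠ i₀ → z j = 0 := by
  by_cases h : ∃ i₀, z i₀ = 1
  · obtain ⟨i₀, h1⟩ := h
    refine ⟨i₀, h1, ?_⟩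
    have hsplit : ∑ i ∈ Finset.univ.erase i₀, z i = 0 := by
      have := Finset.add_sum_erase Finset.univ z (Finset.mem_univ i₀)
      rw [hone, h1] at this
      linarith
    intro j hj
    have hnn : ∀ i ∈ Finset.univ.erase i₀, 0 ≤ z i := by
      intro i _
      rcases hbin i with h' | h' <;> simp [h']
    have := (Finset.sum_eq_zero_iff_of_nonneg hnn).mp hsplit j (by simp [hj])
    exact this
  · push_neg at h
    have : ∀ i, z i = 0 := fun i => (hbin i).resolve_right (h i)
    simp [this] at hone

/-- the total log-likelihood of the probabilistic prompt model,
with one-hot assignments `z`, `ψ t k = ∑ i, z t k i • φ i` and counts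
`c t i = ∑ k, z t k i`, equals the affine form
`∑ i, ∑ t, ∑ k, z t k i * C t k i + m * ∑ i, log (1 - σ(gᵢ))`, where
`C t k i = logN (ω t k | φ i, α (φ i)) + log (σ(gᵢ) / (1 - σ(gᵢ)))`. -/
theorem stmt_7 (d : ℕ) (hd : 1 ≤ d) (n m : ℕ) (nt : Fin m → ℕ)
    (g : Fin n → ℝ) (φ : Fin n → Fin d → ℝ)
    (α : (Fin d → ℝ) → (Fin d → ℝ)) (hα : ∀ x j, 0 < α x j)
    (ω : (t : Fin m) → Fin (nt t) → Fin d → ℝ)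
    (z : (t : Fin m) → Fin (nt t) → Fin n → ℝ)
    (hbin : ∀ t k i, z t k i = 0 ∨ z t k i = 1)
    (hone : ∀ t k, ∑ i, z t k i = 1)
    (ψ : (t : Fin m) → Fin (nt t) → Fin d → ℝ)
    (hψ : ∀ t k, ψ t k = ∑ i, z t k i • φ i)
    (c : Fin m → Fin n → ℝ)
    (hc : ∀ t i, c t i = ∑ k, z t k i)
    (C : (t : Fin m) → Fin (nt t) → Fin n → ℝ)
    (hC : ∀ t k i, C t k i = logN d (ω t k) (φ i) (α (φ i)) +
        Real.log (sigmoid (g i) / (1 - sigmoid (g i)))) :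
    ∑ t, (∑ k, logN d (ω t k) (ψ t k) (α (ψ t k)) +
        ∑ i, (c t i * Real.log (sigmoid (g i)) +
          (1 - c t i) * Real.log (1 - sigmoid (g i)))) =
      ∑ i, ∑ t, ∑ k, z t k i * C t k i +
        (m : ℝ) * ∑ i, Real.log (1 - sigmoid (g i)) := by
  have hlogdiv : ∀ i, Real.log (sigmoid (g i) / (1 - sigmoid (g i))) =
      Real.log (sigmoid (g i)) - Real.log (1 - sigmoid (g i)) := by
    intro i
    exact Real.log_div (ne_of_gt (sigmoid_pos _))
      (ne_of_gt (by linarith [sigmoid_lt_one (g i)]))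
  have key : ∀ t k, logN d (ω t k) (ψ t k) (α (ψ t k)) =
      ∑ i, z t k i * logN d (ω t k) (φ i) (α (φ i)) := by
    intro t k
    obtain ⟨i₀, h1, h0⟩ := onehot (z t k) (hbin t k) (hone t k)
    have hψ' : ψ t k = φ i₀ := by
      rw [hψ, Finset.sum_eq_single i₀]
      · rw [h1, one_smul]
      · intro j _ hj; rw [h0 j hj, zero_smul]
      · simp
    rw [hψ', Finset.sum_eq_single i₀]
    · rw [h1, one_mul]
    · intro j _ hj; rw [h0 j hj, zero_mul]
    · simp
  rw [Finset.sum_comm (s := Finset.univ) (t := Finset.univ)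
      (f := fun i t => ∑ k, z t k i * C t k i)]
  have hm : (m : ℝ) * ∑ i, Real.log (1 - sigmoid (g i)) =
      ∑ _t : Fin m, ∑ i, Real.log (1 - sigmoid (g i)) := by
    simp [Finset.sum_const, mul_comm]
  rw [hm, ← Finset.sum_add_distrib]
  refine Finset.sum_congr rfl fun t _ => ?_
  simp only [key, hC, hc, hlogdiv]
  rw [Finset.sum_comm (s := Finset.univ) (t := Finset.univ)
      (f := fun k i => z t k i * logN d (ω t k) (φ i) (α (φ i)))]
  simp only [mul_add, mul_sub, sub_mul, one_mul, Finset.sum_add_distrib,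
    Finset.sum_sub_distrib, ← Finset.sum_mul]
  ring
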